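/- The associated Hermite polynomials of order 1 admit the expansion $H_{m-1}(\rho,1)=\sum_{k=1}^{m}\frac{i^{k-1}m!}{k!(m-k)!}H_{k-1}(i\rho)\,H_{m-k}(\rho)$ for all $m\ge 1$, where $H_n$ are the monic Hermite polynomials and $i=\sqrt{-1}$. -/

import Mathlib

open Finset

/-- Monic Hermite polynomials over ℂ: `x H_n = H_{n+1} + (n/2) H_{n-1}`. -/
noncomputable def hermC : ℕ → Polynomial ℂ
  | 0 => 1
  | 1 => Polynomial.X
  | (n + 2) => Polynomial.X * hermC (n + 1) - Polynomial.C (((n : ℂ) + 1) / 2) * hermC n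

/-- Monic associated Hermite polynomials of order 1:
`x H_n(x,1) = H_{n+1}(x,1) + ((n+1)/2) H_{n-1}(x,1)`, `H_0(x,1) = 1`, `H_1(x,1) = X`. -/
noncomputable def assocH1 : ℕ → Polynomial ℂ
  | 0 => 1
  | 1 => Polynomial.X
  | (n + 2) => Polynomial.X * assocH1 (n + 1) - Polynomial.C (((n : ℂ) + 2) / 2) * assocH1 n

lemma hermC_rec (x : ℂ) (n : ℕ) :
    (hermC (n+1)).eval x = x * (hermC n).eval x - (n:ℂ)/2 * (hermC (n-1)).eval x := by
  cases n with
  | zero => simp [hermC]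
  | succ k => simp [hermC]

lemma Slem (ρ : ℂ) (n : ℕ) :
    ∑ j ∈ range (n+2), ((n+1).choose j : ℂ) * Complex.I ^ j
        * (hermC j).eval (Complex.I * ρ) * (hermC (n+1-j)).eval ρ = 0 := by
  set I := Complex.I with hI
  set h : ℕ → ℂ := fun j => (hermC j).eval (I * ρ) with hh
  set g : ℕ → ℂ := fun j => (hermC j).eval ρ with hg
  have hrecg : ∀ k, g (k+1) = ρ * g k - (k:ℂ)/2 * g (k-1) := fun k => hermC_rec ρ k
  have hrech : ∀ k, h (k+1) = (I*ρ) * h k - (k:ℂ)/2 * h (k-1) := fun k => hermC_rec (I*ρ) k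
  have hI2 : I^2 = -1 := Complex.I_sq
  -- names for the sums
  set S' : ℂ := ∑ j ∈ range (n+1), (n.choose j : ℂ) * I ^ j * h j * g (n-j) with hS'
  -- step 1: peel j = 0
  rw [Finset.sum_range_succ' (fun j => ((n+1).choose j : ℂ) * I ^ j * h j * g (n+1-j)) (n+1)]
  -- now goal: ∑ j ∈ range (n+1), c (j+1) + c 0 = 0
  have hc0 : ((n+1).choose 0 : ℂ) * I ^ 0 * h 0 * g (n+1-0) = g (n+1) := by
    simp [hh, hg, hermC]
  rw [hc0]
  -- Pascal split
  have pascal : ∀ j ∈ range (n+1),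
      ((n+1).choose (j+1) : ℂ) * I ^ (j+1) * h (j+1) * g (n+1-(j+1))
        = (n.choose j : ℂ) * I ^ (j+1) * h (j+1) * g (n-j)
          + (n.choose (j+1) : ℂ) * I ^ (j+1) * h (j+1) * g (n-j) := by
    intro j _
    rw [Nat.choose_succ_succ, Nat.succ_sub_succ]
    push_cast; ring
  rw [Finset.sum_congr rfl pascal, Finset.sum_add_distrib]
  -- Part A
  have hA : ∀ j ∈ range (n+1),
      (n.choose j : ℂ) * I ^ (j+1) * h (j+1) * g (n-j)
        = -(ρ * ((n.choose j : ℂ) * I ^ j * h j * g (n-j)))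
          - (n.choose j : ℂ) * ((j:ℂ)/2) * I ^ (j+1) * h (j-1) * g (n-j) := by
    intro j _
    rw [hrech j]
    linear_combination (ρ * (n.choose j : ℂ) * h j * g (n-j) * I ^ j) * hI2
  rw [Finset.sum_congr rfl hA, Finset.sum_sub_distrib, Finset.sum_neg_distrib,
    ← Finset.mul_sum, ← hS']
  -- A2 sum : peel j = 0 and flip sign
  have hA2 : ∑ j ∈ range (n+1), (n.choose j : ℂ) * ((j:ℂ)/2) * I ^ (j+1) * h (j-1) * g (n-j)
      = -∑ j ∈ range n, (n.choose (j+1) : ℂ) * (((j:ℕ)+1 : ℂ)/2) * I ^ j * h j * g (n-(j+1)) := by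
    rw [Finset.sum_range_succ' (fun j => (n.choose j : ℂ) * ((j:ℂ)/2) * I ^ (j+1) * h (j-1) * g (n-j)) n]
    rw [← Finset.sum_neg_distrib]
    simp only [Nat.cast_zero, zero_div, Nat.add_sub_cancel]
    rw [show ((n.choose 0 : ℂ) * 0 * I ^ (0+1) * h (0-1) * g (n-0)) = 0 by ring, add_zero]
    refine Finset.sum_congr rfl fun j _ => ?_
    push_cast
    linear_combination ((n.choose (j+1) : ℂ) * (((j:ℂ)+1)/2) * h j * g (n-(j+1)) * I ^ j) * hI2
  rw [hA2]
  -- Part B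
  have hBlast : ∑ x ∈ range (n+1), (n.choose (x+1) : ℂ) * I ^ (x+1) * h (x+1) * g (n-x)
      = ∑ x ∈ range n, (n.choose (x+1) : ℂ) * I ^ (x+1) * h (x+1) * g (n-x) := by
    rw [Finset.sum_range_succ, Nat.choose_succ_self]
    simp
  have hBsplit : ∀ x ∈ range n,
      (n.choose (x+1) : ℂ) * I ^ (x+1) * h (x+1) * g (n-x)
        = ρ * ((n.choose (x+1) : ℂ) * I ^ (x+1) * h (x+1) * g (n-(x+1)))
          - (n.choose (x+1) : ℂ) * (((n-(x+1) : ℕ)) : ℂ)/2 * I ^ (x+1) * h (x+1) * g (n-(x+1)-1) := by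
    intro x hx
    have hx' : x < n := Finset.mem_range.mp hx
    have hnx : n - x = (n-(x+1)) + 1 := by omega
    rw [hnx, hrecg (n-(x+1))]
    ring
  have E2 : ∑ x ∈ range n, (n.choose (x+1) : ℂ) * I ^ (x+1) * h (x+1) * g (n-x)
      = ρ * (∑ x ∈ range n, (n.choose (x+1) : ℂ) * I ^ (x+1) * h (x+1) * g (n-(x+1)))
        - ∑ x ∈ range n, (n.choose (x+1) : ℂ) * (((n-(x+1) : ℕ)) : ℂ)/2 * I ^ (x+1) * h (x+1) * g (n-(x+1)-1) := by
    rw [Finset.sum_congr rfl hBsplit, Finset.sum_sub_distrib, ← Finset.mul_sum]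
  have E3 : S' = (∑ x ∈ range n, (n.choose (x+1) : ℂ) * I ^ (x+1) * h (x+1) * g (n-(x+1))) + g n := by
    rw [hS', Finset.sum_range_succ' (fun x => (n.choose x : ℂ) * I ^ x * h x * g (n-x)) n]
    congr 1
    simp [hh, hg, hermC]
  have E4 : ∑ l ∈ range (n+1), (n.choose l : ℂ) * (((n-l : ℕ)) : ℂ)/2 * I ^ l * h l * g (n-l-1)
      = (∑ x ∈ range n, (n.choose (x+1) : ℂ) * (((n-(x+1) : ℕ)) : ℂ)/2 * I ^ (x+1) * h (x+1) * g (n-(x+1)-1))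
        + (n : ℂ)/2 * g (n-1) := by
    rw [Finset.sum_range_succ'
      (fun l => (n.choose l : ℂ) * (((n-l : ℕ)) : ℂ)/2 * I ^ l * h l * g (n-l-1)) n]
    congr 1
    simp [hh, hermC]
  have E5 : ∑ l ∈ range (n+1), (n.choose l : ℂ) * (((n-l : ℕ)) : ℂ)/2 * I ^ l * h l * g (n-l-1)
      = ∑ j ∈ range n, (n.choose (j+1) : ℂ) * ((↑j + 1) / 2) * I ^ j * h j * g (n - (j+1)) := by
    rw [Finset.sum_range_succ]
    rw [show ((n.choose n : ℂ) * (((n-n : ℕ)) : ℂ)/2 * I ^ n * h n * g (n-n-1)) = 0 by simp]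
    rw [add_zero]
    refine Finset.sum_congr rfl fun j hj => ?_
    have hj' : j < n := Finset.mem_range.mp hj
    have hidx : n - (j+1) = n - j - 1 := by omega
    have hc : ((n.choose (j+1) : ℕ) : ℂ) * ((j:ℂ) + 1) = (n.choose j : ℂ) * ((n-j : ℕ) : ℂ) := by
      exact_mod_cast congrArg (Nat.cast : ℕ → ℂ) (Nat.choose_succ_right_eq n j)
    rw [hidx]
    linear_combination (-(I ^ j * h j * g (n-j-1)) / 2) * hc
  have hg1 := hrecg n
  linear_combination hBlast + E2 - ρ * E3 - E5 + E4 + hg1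

noncomputable def Tsum (ρ : ℂ) (n : ℕ) : ℂ :=
  ∑ j ∈ range (n+1), ((n+1).choose (j+1) : ℂ) * Complex.I ^ j
    * (hermC j).eval (Complex.I * ρ) * (hermC (n-j)).eval ρ

lemma Trec (ρ : ℂ) (n : ℕ) :
    Tsum ρ (n+2) = ρ * Tsum ρ (n+1) - ((n:ℂ)+2)/2 * Tsum ρ n := by
  set I := Complex.I with hI
  set h : ℕ → ℂ := fun j => (hermC j).eval (I * ρ) with hh
  set g : ℕ → ℂ := fun j => (hermC j).eval ρ with hg
  have hrecg : ∀ k, g (k+1) = ρ * g k - (k:ℂ)/2 * g (k-1) := fun k => hermC_rec ρ k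
  have E1 : Tsum ρ (n+2) = (∑ j ∈ range (n+3), ((n+2).choose j : ℂ) * I ^ j * h j * g (n+2-j))
      + ∑ j ∈ range (n+3), ((n+2).choose (j+1) : ℂ) * I ^ j * h j * g (n+2-j) := by
    rw [Tsum, ← Finset.sum_add_distrib]
    refine Finset.sum_congr rfl fun j _ => ?_
    rw [show (n+2+1).choose (j+1) = (n+2).choose j + (n+2).choose (j+1) from Nat.choose_succ_succ _ _]
    push_cast; ring
  have E0 : (∑ j ∈ range (n+3), ((n+2).choose j : ℂ) * I ^ j * h j * g (n+2-j)) = 0 :=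
    Slem ρ (n+1)
  have E2 : ∑ j ∈ range (n+3), ((n+2).choose (j+1) : ℂ) * I ^ j * h j * g (n+2-j)
      = ∑ j ∈ range (n+2), ((n+2).choose (j+1) : ℂ) * I ^ j * h j * g (n+2-j) := by
    rw [Finset.sum_range_succ, Nat.choose_succ_self]; simp
  have E3 : ∀ j ∈ range (n+2),
      ((n+2).choose (j+1) : ℂ) * I ^ j * h j * g (n+2-j)
        = ρ * (((n+2).choose (j+1) : ℂ) * I ^ j * h j * g (n+1-j))
          - ((n+2).choose (j+1) : ℂ) * ((n+1-j : ℕ) : ℂ)/2 * I ^ j * h j * g (n-j) := by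
    intro j hj
    have hj' : j < n+2 := Finset.mem_range.mp hj
    have h1 : n+2-j = (n+1-j)+1 := by omega
    have h2 : n+1-j-1 = n-j := by omega
    rw [h1, hrecg (n+1-j), h2]
    ring
  have E4 : ∑ j ∈ range (n+2), ((n+2).choose (j+1) : ℂ) * I ^ j * h j * g (n+2-j)
      = ρ * Tsum ρ (n+1)
        - ∑ j ∈ range (n+2), ((n+2).choose (j+1) : ℂ) * ((n+1-j : ℕ) : ℂ)/2 * I ^ j * h j * g (n-j) := by
    rw [Finset.sum_congr rfl E3, Finset.sum_sub_distrib, ← Finset.mul_sum, Tsum]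
  have E5 : ∑ j ∈ range (n+2), ((n+2).choose (j+1) : ℂ) * ((n+1-j : ℕ) : ℂ)/2 * I ^ j * h j * g (n-j)
      = ((n:ℂ)+2)/2 * Tsum ρ n := by
    rw [Finset.sum_range_succ, show (n+1-(n+1) : ℕ) = 0 by omega]
    push_cast [Nat.cast_zero]
    rw [show ((n+2).choose (n+1+1) : ℂ) * 0/2 * I ^ (n+1) * h (n+1) * g (n-(n+1)) = 0 by ring, add_zero]
    rw [Tsum, Finset.mul_sum]
    refine Finset.sum_congr rfl fun j hj => ?_
    have hj' : j < n+1 := Finset.mem_range.mp hj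
    have hc : (((n+2).choose (j+1) * (n+1-j) : ℕ) : ℂ) = (((n+2) * ((n+1).choose (j+1)) : ℕ) : ℂ) := by
      congr 1
      have h1 := Nat.choose_succ_right_eq (n+2) (j+1)
      have h2 := Nat.add_one_mul_choose_eq (n+1) (j+1)
      have h3 : n+2-(j+1) = n+1-j := by omega
      rw [h3] at h1
      rw [← h1]
      exact h2.symm
    push_cast at hc
    linear_combination (I ^ j * h j * g (n-j) / 2) * hc
  rw [E1, E0, E2, E4, E5, zero_add]

lemma assoc_eq (ρ : ℂ) (n : ℕ) : (assocH1 n).eval ρ = Tsum ρ n := by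
  induction n using Nat.twoStepInduction with
  | zero => simp [assocH1, Tsum, hermC]
  | one =>
    simp [assocH1, Tsum, Finset.sum_range_succ, hermC]
    linear_combination (-ρ) * Complex.I_sq
  | more n ih1 ih2 =>
    rw [Trec, ← ih1, ← ih2]
    simp [assocH1]

/-- `H_{m-1}(ρ,1) = ∑_{k=1}^{m} i^{k-1} m!/(k!(m-k)!) H_{k-1}(iρ) H_{m-k}(ρ)` for `m ≥ 1`. -/
theorem stmt19 (m : ℕ) (hm : 1 ≤ m) (ρ : ℂ) :
    (assocH1 (m - 1)).eval ρ
      = ∑ k ∈ Finset.Icc 1 m,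
          Complex.I ^ (k - 1) * (m.factorial : ℂ) / ((k.factorial : ℂ) * ((m - k).factorial : ℂ))
            * (hermC (k - 1)).eval (Complex.I * ρ) * (hermC (m - k)).eval ρ := by
  obtain ⟨n, rfl⟩ : ∃ n, m = n + 1 := ⟨m - 1, by omega⟩
  rw [Nat.add_sub_cancel, assoc_eq, ← Finset.Ico_add_one_right_eq_Icc, Finset.sum_Ico_eq_sum_range]
  rw [show n + 1 + 1 - 1 = n + 1 from rfl, Tsum]
  refine Finset.sum_congr rfl fun j hj => ?_
  have hj' : j < n + 1 := Finset.mem_range.mp hj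
  rw [show 1 + j - 1 = j by omega, show n + 1 - (1 + j) = n - j by omega]
  have key : (((n+1).choose (j+1) : ℕ) : ℂ) * ((j+1).factorial : ℂ) * ((n-j).factorial : ℂ)
      = ((n+1).factorial : ℂ) := by
    have h1 : (n+1).choose (j+1) * (j+1).factorial * ((n+1)-(j+1)).factorial = (n+1).factorial :=
      Nat.choose_mul_factorial_mul_factorial (by omega)
    rw [show (n+1)-(j+1) = n-j by omega] at h1
    exact_mod_cast h1
  have hfj : (((j+1).factorial : ℕ) : ℂ) ≠ 0 := Nat.cast_ne_zero.mpr (Nat.factorial_ne_zero _)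
  have hfnj : (((n-j).factorial : ℕ) : ℂ) ≠ 0 := Nat.cast_ne_zero.mpr (Nat.factorial_ne_zero _)
  rw [show (1+j).factorial = (j+1).factorial by rw [Nat.add_comm]]
  field_simp
  linear_combination ((hermC j).eval (Complex.I * ρ) * (hermC (n-j)).eval ρ) * key
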